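/- Let G be a finite group with |G| > 1 and let C be a generating set of G. Then Φ(G;C) is exactly the set of all elements y ∈ G with the following property: for every subset X ⊆ G, if the normal C-closure of X ∪ {y} generates G, then the normal C-closure of X also generates G. -/

import Mathlib

namespace NETCayley

variable {G : Type*} [Group G]

/-- `Aut(G;C)`: the subgroup of `MulAut G` consisting of automorphisms `σ` with `C^σ = C`. -/
def autSub (C : Set G) : Subgroup (MulAut G) where
  carrier := {σ : MulAut G | ⇑σ '' C = C}
  one_mem' := by simp
  mul_mem' := by
    intro a b ha hb
    rw [Set.mem_setOf_eq] at ha hb ⊢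
    have h : ⇑(a * b) = ⇑a ∘ ⇑b := rfl
    rw [h, Set.image_comp, hb, ha]
  inv_mem' := by
    intro a ha
    rw [Set.mem_setOf_eq] at ha ⊢
    conv_lhs => rw [← ha]
    rw [← Set.image_comp]
    have h : ⇑a⁻¹ ∘ ⇑a = id := by funext x; simp
    rw [h, Set.image_id]

/-- `A(G;C)`: proper normal `Aut(G;C)`-invariant subgroups of `G`. -/
def setA (C : Set G) : Set (Subgroup G) :=
  {N | N.Normal ∧ N ≠ ⊤ ∧ ∀ σ ∈ autSub C, N.map (σ : MulAut G).toMonoidHom = N}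

/-- `A_max(G;C)`: maximal (by inclusion) elements of `A(G;C)`. -/
def setAmax (C : Set G) : Set (Subgroup G) :=
  {N | N ∈ setA C ∧ ∀ M ∈ setA C, N ≤ M → N = M}

/-- `Φ(G;C)`: the intersection of all members of `A_max(G;C)`. -/
def PhiC (C : Set G) : Subgroup G := sInf (setAmax C)

/-- `X` is normal `C`-closed: `(x^g)^σ ∈ X` for all `x ∈ X`, `g ∈ G`, `σ ∈ Aut(G;C)`. -/
def NormalCClosed (C X : Set G) : Prop :=
  ∀ x ∈ X, ∀ g : G, ∀ σ ∈ autSub C, σ (g⁻¹ * x * g) ∈ X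

/-- The normal `C`-closure of `X`: `{(x^g)^σ : x ∈ X, g ∈ G, σ ∈ Aut(G;C)}`. -/
def normalCClosure (C X : Set G) : Set G :=
  {y | ∃ x ∈ X, ∃ g : G, ∃ σ ∈ autSub C, σ (g⁻¹ * x * g) = y}

/-- The orbit of `c` under the natural action of `Aut(G;C)`. -/
def orbitC (C : Set G) (c : G) : Set G := {y | ∃ σ ∈ autSub C, σ c = y}

/-- `C` is a transitive set: either `Aut(G;C)` is transitive on `C`, or there are exactly two
orbits `C₊`, `C₋` on `C` with `C = C₊ ∪ C₋` and `C₋ = C₊⁻¹`. -/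
def TransSet (C : Set G) : Prop :=
  (∀ c ∈ C, ∀ c' ∈ C, ∃ σ ∈ autSub C, σ c = c') ∨
  (∃ cp ∈ C, ∃ cm ∈ C, orbitC C cp ≠ orbitC C cm ∧
    C = orbitC C cp ∪ orbitC C cm ∧ orbitC C cm = (orbitC C cp)⁻¹)

/-- A transitive inverse-closed generating set of `G`. -/
def IsTransGenSet (C : Set G) : Prop :=
  (1 : G) ∉ C ∧ (∀ c ∈ C, c⁻¹ ∈ C) ∧ Subgroup.closure C = ⊤ ∧ TransSet C


lemma subset_normalCClosure (C X : Set G) : X ⊆ normalCClosure C X := by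
  intro x hx
  exact ⟨x, hx, 1, 1, (autSub C).one_mem, by simp⟩

lemma image_ncl_subset (C X : Set G) {σ : MulAut G} (hσ : σ ∈ autSub C) :
    ⇑σ '' normalCClosure C X ⊆ normalCClosure C X := by
  rintro _ ⟨_, ⟨x, hx, g, τ, hτ, rfl⟩, rfl⟩
  exact ⟨x, hx, g, σ * τ, (autSub C).mul_mem hσ hτ, by rw [MulAut.mul_apply]⟩

lemma image_ncl_eq (C X : Set G) {σ : MulAut G} (hσ : σ ∈ autSub C) :
    ⇑σ '' normalCClosure C X = normalCClosure C X := by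
  apply le_antisymm (image_ncl_subset C X hσ)
  intro z hz
  refine ⟨σ⁻¹ z, image_ncl_subset C X ((autSub C).inv_mem hσ) ⟨z, hz, rfl⟩, ?_⟩
  simp

lemma conj_image_ncl_subset (C X : Set G) (h : G) :
    (fun y => h * y * h⁻¹) '' normalCClosure C X ⊆ normalCClosure C X := by
  rintro _ ⟨_, ⟨x, hx, g, σ, hσ, rfl⟩, rfl⟩
  refine ⟨x, hx, g * σ⁻¹ h⁻¹, σ, hσ, ?_⟩
  have hσh : σ (σ⁻¹ h) = h := by simp
  simp only [mul_inv_rev, map_mul, map_inv, hσh]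
  group

lemma closure_ncl_normal (C X : Set G) :
    (Subgroup.closure (normalCClosure C X)).Normal := by
  constructor
  intro n hn h
  have hmap := MonoidHom.map_closure (MulAut.conj h).toMonoidHom (normalCClosure C X)
  have hle : Subgroup.map (MulAut.conj h).toMonoidHom
      (Subgroup.closure (normalCClosure C X)) ≤ Subgroup.closure (normalCClosure C X) := by
    rw [hmap]
    apply Subgroup.closure_mono
    intro z hz
    exact conj_image_ncl_subset C X h hz
  have : (MulAut.conj h).toMonoidHom n ∈
      Subgroup.map (MulAut.conj h).toMonoidHom (Subgroup.closure (normalCClosure C X)) :=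
    ⟨n, hn, rfl⟩
  have := hle this
  simpa [MulAut.conj_apply] using this

lemma closure_ncl_map (C X : Set G) {σ : MulAut G} (hσ : σ ∈ autSub C) :
    (Subgroup.closure (normalCClosure C X)).map (σ : MulAut G).toMonoidHom =
      Subgroup.closure (normalCClosure C X) := by
  rw [MonoidHom.map_closure]
  congr 1
  exact image_ncl_eq C X hσ

lemma ncl_subset_of_mem_setA {C : Set G} {N : Subgroup G}
    (hNn : N.Normal) (hNi : ∀ σ ∈ autSub C, N.map (σ : MulAut G).toMonoidHom = N)
    {X : Set G} (hX : X ⊆ N) : normalCClosure C X ⊆ N := by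
  rintro _ ⟨x, hx, g, σ, hσ, rfl⟩
  have h1 : g⁻¹ * x * g ∈ N := by
    simpa using hNn.conj_mem x (hX hx) g⁻¹
  rw [← hNi σ hσ]
  exact ⟨_, h1, rfl⟩

lemma exists_max_above {C : Set G} [Finite G] {N : Subgroup G} (hN : N ∈ setA C) :
    ∃ M ∈ setAmax C, N ≤ M := by
  obtain ⟨M, ⟨hM, hNM⟩, hmax⟩ :=
    Set.Finite.exists_maximalFor id ({M | M ∈ setA C ∧ N ≤ M}) (Set.toFinite _)
      ⟨N, hN, le_refl N⟩
  refine ⟨M, ⟨hM, fun M' hM' hle => ?_⟩, hNM⟩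
  exact le_antisymm hle (hmax ⟨hM', le_trans hNM hle⟩ hle)

/-- `Φ(G;C)` is exactly the set of elements `y` such that for every `X ⊆ G`,
if the normal `C`-closure of `X ∪ {y}` generates `G`, then so does the normal `C`-closure
of `X`. -/
theorem stmt1 {G : Type*} [Group G] [Finite G] [Nontrivial G] (C : Set G)
    (hC : Subgroup.closure C = ⊤) :
    (PhiC C : Set G) = {y : G | ∀ X : Set G,
      Subgroup.closure (normalCClosure C (X ∪ {y})) = ⊤ →
      Subgroup.closure (normalCClosure C X) = ⊤} := by
  ext y
  simp only [SetLike.mem_coe, Set.mem_setOf_eq, PhiC, Subgroup.mem_sInf]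
  constructor
  · -- Φ ⊆ nongenerators
    intro hy X hXy
    by_contra hX
    set N := Subgroup.closure (normalCClosure C X) with hNdef
    have hNA : N ∈ setA C := ⟨closure_ncl_normal C X, hX, fun σ hσ => closure_ncl_map C X hσ⟩
    obtain ⟨M, hM, hNM⟩ := exists_max_above hNA
    have hyM : y ∈ M := hy M hM
    have hXM : X ∪ {y} ⊆ (M : Set G) := by
      rintro z (hz | rfl)
      · exact hNM (Subgroup.subset_closure (subset_normalCClosure C X hz))
      · exact hyM
    have : normalCClosure C (X ∪ {y}) ⊆ (M : Set G) :=
      ncl_subset_of_mem_setA hM.1.1 hM.1.2.2 hXM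
    have : Subgroup.closure (normalCClosure C (X ∪ {y})) ≤ M :=
      (Subgroup.closure_le M).mpr this
    rw [hXy] at this
    exact hM.1.2.1 (top_le_iff.mp this)
  · -- nongenerators ⊆ Φ
    intro hy M hM
    by_contra hyM
    set K := Subgroup.closure (normalCClosure C ((M : Set G) ∪ {y})) with hKdef
    have hMK : M ≤ K := fun z hz =>
      Subgroup.subset_closure (subset_normalCClosure C _ (Or.inl hz))
    have hyK : y ∈ K :=
      Subgroup.subset_closure (subset_normalCClosure C _ (Or.inr rfl))
    have hKtop : K = ⊤ := by
      by_contra hKne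
      have hKA : K ∈ setA C :=
        ⟨closure_ncl_normal C _, hKne, fun σ hσ => closure_ncl_map C _ hσ⟩
      have := hM.2 K hKA hMK
      exact hyM (this ▸ hyK)
    have := hy (M : Set G) hKtop
    have hle : Subgroup.closure (normalCClosure C (M : Set G)) ≤ M :=
      (Subgroup.closure_le M).mpr
        (ncl_subset_of_mem_setA hM.1.1 hM.1.2.2 le_rfl)
    rw [this] at hle
    exact hM.1.2.1 (top_le_iff.mp hle)

end NETCayley
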